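/- arXiv:1007.1333 — 2 statements merged into one kernel-verified Lean document; each statement's English description precedes it below -/
import Mathlib

section
/- Let B = (Q, δ, q₀, F) be a deterministic automaton over a finite alphabet Σ and let S ⊆ Q be a strongly connected component of B. (1) If every cycle that stays entirely inside S passes through a state of F, then the automaton B' obtained from B by replacing F with F ∪ S satisfies L_B(B') = L_B(B). (2) If no cycle that stays entirely inside S passes through a state of F, then the automaton B'' obtained from B by replacing F with F \ S satisfies L_B(B'') = L_B(B). -/
/-- The run of the deterministic automaton `M` from state `q` on the infinite
word `x`. -/
def DFA.runFrom {α σ : Type*} (M : DFA α σ) (q : σ) (x : ℕ → α) : ℕ → σ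
  | 0 => q
  | n + 1 => M.step (M.runFrom q x n) (x n)

/-- The Büchi language of a deterministic automaton: the set of infinite words
whose run from the initial state visits the accepting set infinitely often. -/
def BuchiLang {α σ : Type*} (M : DFA α σ) : Set (ℕ → α) :=
  {x | {n | M.runFrom M.start x n ∈ M.accept}.Infinite}

/-- The list of states visited when reading the finite word `w` from state `s`
(the state reached at the very end is not listed; it is `M.evalFrom s w`). -/
def DFA.trace {α σ : Type*} (M : DFA α σ) : σ → List α → List σ
  | s, [] => [s]
  | s, a :: w => s :: M.trace (M.step s a) w

/-- `q` is reachable from `p` in `M` (possibly on the empty word). -/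
def Reach {α σ : Type*} (M : DFA α σ) (p q : σ) : Prop :=
  ∃ w : List α, M.evalFrom p w = q

namespace BuchiAux

variable {α σ : Type}

/-- The finite segment `x n, x (n+1), …, x (n+k-1)` of an infinite word. -/
def seg (x : ℕ → α) : ℕ → ℕ → List α
  | _, 0 => []
  | n, k + 1 => x n :: seg x (n + 1) k

lemma reach_trans (B : DFA α σ) {p q r : σ} (h1 : Reach B p q) (h2 : Reach B q r) :
    Reach B p r := by
  obtain ⟨w₁, h1⟩ := h1
  obtain ⟨w₂, h2⟩ := h2
  exact ⟨w₁ ++ w₂, by simp [DFA.evalFrom, List.foldl_append] at *; rw [h1, h2]⟩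

lemma run_eval (B : DFA α σ) (x : ℕ → α) (q : σ) :
    ∀ k n, B.runFrom q x (n + k) = B.evalFrom (B.runFrom q x n) (seg x n k) := by
  intro k
  induction k with
  | zero => intro n; rfl
  | succ k ih =>
    intro n
    rw [show n + (k + 1) = (n + 1) + k by omega, ih (n + 1)]
    rfl

lemma trace_seg (B : DFA α σ) (x : ℕ → α) (q0 : σ) :
    ∀ k n q, q ∈ B.trace (B.runFrom q0 x n) (seg x n k) ↔
      ∃ j ≤ k, q = B.runFrom q0 x (n + j) := by
  intro k
  induction k with
  | zero =>
    intro n q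
    simp only [seg, DFA.trace, List.mem_singleton]
    constructor
    · intro h; exact ⟨0, le_rfl, h⟩
    · rintro ⟨j, hj, rfl⟩
      have hj0 : j = 0 := Nat.le_zero.mp hj
      subst hj0; rfl
  | succ k ih =>
    intro n q
    show q ∈ B.runFrom q0 x n :: B.trace (B.step (B.runFrom q0 x n) (x n)) (seg x (n+1) k) ↔ _
    have hstep : B.step (B.runFrom q0 x n) (x n) = B.runFrom q0 x (n + 1) := rfl
    rw [hstep, List.mem_cons, ih (n + 1)]
    constructor
    · rintro (rfl | ⟨j, hj, rfl⟩)
      · exact ⟨0, by omega, rfl⟩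
      · exact ⟨j + 1, by omega, by rw [show n + (j+1) = n + 1 + j by omega]⟩
    · rintro ⟨j, hj, rfl⟩
      rcases Nat.eq_zero_or_pos j with rfl | hpos
      · exact Or.inl rfl
      · exact Or.inr ⟨j - 1, by omega, by rw [show n + 1 + (j-1) = n + j by omega]⟩

lemma trace_sub_scc (B : DFA α σ) (a : σ) (x : ℕ → α) (q0 : σ) {n m : ℕ}
    (hnm : n < m) (hloop : B.runFrom q0 x m = B.runFrom q0 x n)
    (hs : Reach B a (B.runFrom q0 x n) ∧ Reach B (B.runFrom q0 x n) a) :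
    ∀ q ∈ B.trace (B.runFrom q0 x n) (seg x n (m - n)), Reach B a q ∧ Reach B q a := by
  intro q hq
  rw [trace_seg] at hq
  obtain ⟨j, hj, rfl⟩ := hq
  have h1 : Reach B (B.runFrom q0 x n) (B.runFrom q0 x (n + j)) :=
    ⟨seg x n j, (run_eval B x q0 j n).symm⟩
  have h2 : Reach B (B.runFrom q0 x (n + j)) (B.runFrom q0 x n) := by
    refine ⟨seg x (n + j) (m - (n + j)), ?_⟩
    rw [← run_eval, show n + j + (m - (n + j)) = m by omega, hloop]
  exact ⟨reach_trans B hs.1 h1, reach_trans B h2 hs.2⟩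

lemma run_congr (B : DFA α σ) (A : Set σ) (q : σ) (x : ℕ → α) :
    ∀ n, DFA.runFrom ⟨B.step, B.start, A⟩ q x n = B.runFrom q x n := by
  intro n
  induction n with
  | zero => rfl
  | succ n ih => simp [DFA.runFrom, ih]

end BuchiAux

open BuchiAux in
theorem buchiLang_homogenise_scc {α σ : Type} [Fintype α] [Fintype σ]
    (B : DFA α σ) (S : Set σ)
    (hS : ∃ a : σ, S = {b | Reach B a b ∧ Reach B b a}) :
    ((∀ s ∈ S, ∀ w : List α, w ≠ [] → B.evalFrom s w = s →
        (∀ q ∈ B.trace s w, q ∈ S) → ∃ q ∈ B.trace s w, q ∈ B.accept) →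
      BuchiLang ⟨B.step, B.start, B.accept ∪ S⟩ = BuchiLang B) ∧
    ((∀ s ∈ S, ∀ w : List α, w ≠ [] → B.evalFrom s w = s →
        (∀ q ∈ B.trace s w, q ∈ S) → ∀ q ∈ B.trace s w, q ∉ B.accept) →
      BuchiLang ⟨B.step, B.start, B.accept \ S⟩ = BuchiLang B) := by
  obtain ⟨a, hSa⟩ := hS
  -- common facts about loops
  have key : ∀ (x : ℕ → α) (n m : ℕ), n < m →
      B.runFrom B.start x m = B.runFrom B.start x n → B.runFrom B.start x n ∈ S →
      (seg x n (m - n) ≠ [] ∧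
       B.evalFrom (B.runFrom B.start x n) (seg x n (m - n)) = B.runFrom B.start x n ∧
       ∀ q ∈ B.trace (B.runFrom B.start x n) (seg x n (m - n)), q ∈ S) := by
    intro x n m hnm hloop hsS
    refine ⟨?_, ?_, ?_⟩
    · obtain ⟨k, hk⟩ : ∃ k, m - n = k + 1 := ⟨m - n - 1, by omega⟩
      rw [hk]; simp [seg]
    · rw [← run_eval, show n + (m - n) = m by omega, hloop]
    · intro q hq
      rw [hSa]
      have hs' : Reach B a (B.runFrom B.start x n) ∧ Reach B (B.runFrom B.start x n) a := by
        rw [hSa] at hsS; exact hsS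
      exact trace_sub_scc B a x B.start hnm hloop hs' q hq
  constructor
  · -- part 1
    intro hcyc
    ext x
    simp only [BuchiLang, Set.mem_setOf_eq, run_congr]
    constructor
    · intro h
      by_contra hF
      rw [Set.not_infinite] at hF
      have hSinf : {n | B.runFrom B.start x n ∈ S}.Infinite := by
        by_contra hSfin
        rw [Set.not_infinite] at hSfin
        exact Set.not_infinite.mpr (hF.union hSfin)
          (h.mono fun n hn => by rcases hn with hn | hn
                                 · exact Or.inl hn
                                 · exact Or.inr hn)
      -- F is visited above any bound, contradiction with hF
      obtain ⟨N, hN⟩ := hF.bddAbove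
      have hA : ({n | B.runFrom B.start x n ∈ S} \ Set.Iic N).Infinite :=
        hSinf.diff (Set.finite_Iic N)
      obtain ⟨n, hn, m, hm, hne, heq⟩ :=
        hA.exists_ne_map_eq_of_mapsTo (f := fun n => B.runFrom B.start x n)
          (t := (Set.univ : Set σ)) (fun _ _ => Set.mem_univ _) Set.finite_univ
      have finish : ∀ n m : ℕ, B.runFrom B.start x n ∈ S → N < n → n < m →
          B.runFrom B.start x m = B.runFrom B.start x n → False := by
        intro n m hnS hNn hnm hloop
        obtain ⟨hne', heval, htr⟩ := key x n m hnm hloop hnS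
        obtain ⟨q, hq, hqF⟩ := hcyc _ hnS _ hne' heval htr
        rw [trace_seg] at hq
        obtain ⟨j, hj, rfl⟩ := hq
        have hle : n + j ≤ N := hN hqF
        omega
      have hNn : N < n := by
        have := hn.2; simp only [Set.mem_Iic] at this; omega
      have hNm : N < m := by
        have := hm.2; simp only [Set.mem_Iic] at this; omega
      rcases Ne.lt_or_gt hne with hlt | hlt
      · exact finish n m hn.1 hNn hlt heq.symm
      · exact finish m n hm.1 hNm hlt heq
    · intro h
      exact h.mono fun n hn => Or.inl hn
  · -- part 2
    intro hcyc
    ext x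
    simp only [BuchiLang, Set.mem_setOf_eq, run_congr]
    constructor
    · intro h
      exact h.mono fun n hn => hn.1
    · intro h
      by_contra hD
      rw [Set.not_infinite] at hD
      have hFS : {n | B.runFrom B.start x n ∈ B.accept ∩ S}.Infinite := by
        by_contra hfin
        rw [Set.not_infinite] at hfin
        exact Set.not_infinite.mpr (hD.union hfin)
          (h.mono fun n hn => by by_cases hnS : B.runFrom B.start x n ∈ S
                                 · exact Or.inr ⟨hn, hnS⟩
                                 · exact Or.inl ⟨hn, hnS⟩)
      obtain ⟨n, hn, m, hm, hne, heq⟩ :=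
        hFS.exists_ne_map_eq_of_mapsTo (f := fun n => B.runFrom B.start x n)
          (t := (Set.univ : Set σ)) (fun _ _ => Set.mem_univ _) Set.finite_univ
      rcases Ne.lt_or_gt hne with hlt | hlt
      · obtain ⟨hne', heval, htr⟩ := key x n m hlt heq.symm hn.2
        have hhead : B.runFrom B.start x n ∈
            B.trace (B.runFrom B.start x n) (seg x n (m - n)) := by
          rw [trace_seg]; exact ⟨0, by omega, rfl⟩
        exact hcyc _ hn.2 _ hne' heval htr _ hhead hn.1
      · obtain ⟨hne', heval, htr⟩ := key x m n hlt heq hm.2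
        have hhead : B.runFrom B.start x m ∈
            B.trace (B.runFrom B.start x m) (seg x m (n - m)) := by
          rw [trace_seg]; exact ⟨0, by omega, rfl⟩
        exact hcyc _ hm.2 _ hne' heval htr _ hhead hm.1
end

section
/- Let B = (Q, δ, q₀, F) be a deterministic automaton over a finite alphabet Σ such that every strongly connected component of B that is reachable from q₀ is homogeneous, i.e., consists only of states in F or only of states not in F. Then B is weak: L_B(B) = L_C(B). -/
/-- State `p` of `M₁` and state `q` of `M₂` are almost equivalent: for every
infinite word, the runs from `p` and from `q` disagree on membership in the
accepting sets only at finitely many positions. -/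
def AlmostEquiv {α σ₁ σ₂ : Type*} (M₁ : DFA α σ₁) (M₂ : DFA α σ₂)
    (p : σ₁) (q : σ₂) : Prop :=
  ∀ x : ℕ → α,
    {n : ℕ | (M₁.runFrom p x n ∈ M₁.accept) ≠ (M₂.runFrom q x n ∈ M₂.accept)}.Finite

/-- The co-Büchi language of a deterministic automaton: the set of infinite
words whose run from the initial state leaves the accepting set only finitely
often. -/
def CoBuchiLang {α σ : Type*} (M : DFA α σ) : Set (ℕ → α) :=
  {x | {n | M.runFrom M.start x n ∉ M.accept}.Finite}

lemma evalFrom_runFrom {α σ : Type} (B : DFA α σ) (x : ℕ → α) (q : σ) (m : ℕ) :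
    ∀ k, B.evalFrom (B.runFrom q x m) (List.ofFn fun i : Fin k => x (m + i)) =
      B.runFrom q x (m + k) := by
  intro k
  induction k with
  | zero => simp [DFA.evalFrom]
  | succ k ih =>
    rw [List.ofFn_succ', List.concat_eq_append]
    simp only [Fin.coe_castSucc, Fin.val_last]
    rw [DFA.evalFrom_append_singleton, ih]
    simp [DFA.runFrom]

lemma reach_runFrom {α σ : Type} (B : DFA α σ) (x : ℕ → α) (q : σ) {m n : ℕ}
    (hmn : m ≤ n) : Reach B (B.runFrom q x m) (B.runFrom q x n) := by
  refine ⟨List.ofFn fun i : Fin (n - m) => x (m + i), ?_⟩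
  rw [evalFrom_runFrom]
  congr 1
  omega

theorem weak_of_homogeneous_sccs {α σ : Type} [Fintype α] [Fintype σ]
    (B : DFA α σ)
    (h : ∀ p q : σ, Reach B B.start p → Reach B p q → Reach B q p →
      (p ∈ B.accept ↔ q ∈ B.accept)) :
    BuchiLang B = CoBuchiLang B := by
  classical
  ext x
  set r := B.runFrom B.start x with hr
  have hreach0 : ∀ n, Reach B B.start (r n) := fun n => reach_runFrom B x B.start (Nat.zero_le n)
  simp only [BuchiLang, CoBuchiLang, Set.mem_setOf_eq]
  constructor
  · intro hI
    -- find a state visited infinitely often among accepting positions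
    have hcover : {n | r n ∈ B.accept} ⊆ ⋃ s : σ, {n | r n = s ∧ r n ∈ B.accept} := by
      intro n hn
      exact Set.mem_iUnion.2 ⟨r n, rfl, hn⟩
    have : ∃ s : σ, {n | r n = s ∧ r n ∈ B.accept}.Infinite := by
      by_contra hc
      push_neg at hc
      exact hI ((Set.finite_iUnion hc).subset hcover)
    obtain ⟨q₁, hq₁⟩ := this
    have hq₁F : q₁ ∈ B.accept := by
      obtain ⟨n, hn1, hn2⟩ := hq₁.nonempty
      rwa [hn1] at hn2
    have hq₁inf : {n | r n = q₁}.Infinite := hq₁.mono (fun n hn => hn.1)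
    -- any infinitely visited state is in accept
    have key : ∀ s : σ, {n | r n = s}.Infinite → s ∈ B.accept := by
      intro s hs
      obtain ⟨n, hn⟩ := hq₁inf.nonempty
      obtain ⟨m, hm, hnm⟩ := hs.exists_gt n
      obtain ⟨n', hn', hmn'⟩ := hq₁inf.exists_gt m
      have h1 : Reach B q₁ s := by
        rw [← hn, ← hm]; exact reach_runFrom B x B.start (le_of_lt hnm)
      have h2 : Reach B s q₁ := by
        rw [← hm, ← hn']; exact reach_runFrom B x B.start (le_of_lt hmn')
      have := h q₁ s (hn ▸ hreach0 n) h1 h2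
      exact this.mp hq₁F
    -- states not in accept visited finitely often
    have : {n | r n ∉ B.accept} ⊆ ⋃ s ∈ (Finset.univ.filter fun s : σ => s ∉ B.accept),
        {n | r n = s} := by
      intro n hn
      simp only [Set.mem_iUnion, Finset.mem_filter, Finset.mem_univ, true_and]
      exact ⟨r n, hn, rfl⟩
    refine Set.Finite.subset (Set.Finite.biUnion (Finset.finite_toSet _) ?_) this
    intro s hs
    simp only [Finset.coe_filter, Set.mem_setOf_eq, Finset.mem_univ, true_and] at hs
    by_contra hc
    exact hs (key s hc)
  · intro hf
    have := hf.infinite_compl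
    have hcompl : {n | r n ∉ B.accept}ᶜ = {n | r n ∈ B.accept} := by
      ext n; simp
    rwa [hcompl] at this
end
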